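/- Let σ(t) = 1/(1+e^{−t}) be the logistic sigmoid, let w ∈ ℝ^{d+1} with coordinates w_0, …, w_d, b ∈ ℝ, f(x) = σ(⟨w,x⟩ + b), y ∈ {0,1}, and l(x) = y·log f(x) + (1−y)·log(1 − f(x)). For λ ∈ [0,1)^d let x_λ := (x_{0,λ}, x_{1,λ}, …, x_{d,λ}) ∈ ℝ^{d+1} be the augmented feature vector. Then for each 1 ≤ j ≤ d, the map t ↦ l(x_{λ[j:=t]}) is differentiable at t = λ_j with derivative (y − f(x_λ)) · Σ_{i=j}^{d} w_i · D_{i,j}, where D_{j,j} = x_{j−1,λ} − x_j and D_{i,j} = (∏_{k=j+1}^{i} λ_k)·(x_{j−1,λ} − x_j) for i > j. -/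

import Mathlib

open Finset Real

/-- Recursively interpolated scalars. -/
noncomputable def interp (x : ℕ → ℝ) (lam : ℕ → ℝ) : ℕ → ℝ
  | 0 => x 0
  | n + 1 => (1 - lam (n + 1)) * x (n + 1) + lam (n + 1) * interp x lam n

lemma interp_update_lt (x lam : ℕ → ℝ) (j : ℕ) (t : ℝ) :
    ∀ n, n < j → interp x (Function.update lam j t) n = interp x lam n := by
  intro n
  induction n with
  | zero => intro _; rfl
  | succ n ih =>
    intro h
    simp only [interp, Function.update_of_ne (by omega : n + 1 ≠ j), ih (by omega)]

lemma interp_hasDerivAt (x lam : ℕ → ℝ) (j : ℕ) (hj1 : 1 ≤ j) (n : ℕ) :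
    HasDerivAt (fun t => interp x (Function.update lam j t) n)
      (if n < j then 0
       else (∏ k ∈ Finset.Icc (j + 1) n, lam k) * (interp x lam (j - 1) - x j))
      (lam j) := by
  induction n with
  | zero =>
    rw [if_pos (by omega : 0 < j)]
    exact hasDerivAt_const _ _
  | succ n ih =>
    rcases lt_trichotomy (n + 1) j with h | h | h
    · rw [if_pos h]
      have heq : (fun t => interp x (Function.update lam j t) (n + 1))
          = fun _ => interp x lam (n + 1) := by
        funext t; exact interp_update_lt x lam j t (n + 1) h
      rw [heq]; exact hasDerivAt_const _ _
    · subst h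
      rw [if_neg (by omega)]
      have heq : (fun t => interp x (Function.update lam (n + 1) t) (n + 1))
          = fun t => (1 - t) * x (n + 1) + t * interp x lam n := by
        funext t
        simp only [interp, Function.update_self,
          interp_update_lt x lam (n + 1) t n (by omega)]
      rw [heq]
      have h1 : HasDerivAt (fun t : ℝ => (1 - t) * x (n + 1)) ((-1) * x (n + 1)) (lam (n + 1)) :=
        (((hasDerivAt_id (lam (n + 1))).const_sub 1).mul_const _)
      have h2 : HasDerivAt (fun t : ℝ => t * interp x lam n) (1 * interp x lam n) (lam (n + 1)) :=
        (hasDerivAt_id (lam (n + 1))).mul_const _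
      have := h1.add h2
      refine this.congr_deriv ?_
      simp [Finset.Icc_eq_empty (by omega : ¬ (n + 1) + 1 ≤ n + 1)]
      ring
    · rw [if_neg (by omega)]
      have heq : (fun t => interp x (Function.update lam j t) (n + 1))
          = fun t => (1 - lam (n + 1)) * x (n + 1)
              + lam (n + 1) * interp x (Function.update lam j t) n := by
        funext t
        simp only [interp, Function.update_of_ne (by omega : n + 1 ≠ j)]
      rw [heq]
      rw [if_neg (by omega)] at ih
      have := (ih.const_mul (lam (n + 1))).const_add ((1 - lam (n + 1)) * x (n + 1))
      refine this.congr_deriv ?_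
      rw [Finset.prod_Icc_succ_top (by omega : j + 1 ≤ n + 1)]
      ring

lemma logistic_loss_hasDerivAt (y z : ℝ) :
    HasDerivAt (fun z => y * Real.log (1 / (1 + Real.exp (-z)))
        + (1 - y) * Real.log (1 - 1 / (1 + Real.exp (-z))))
      (y - 1 / (1 + Real.exp (-z))) z := by
  have hE : HasDerivAt (fun z : ℝ => Real.exp (-z)) (-Real.exp (-z)) z := by
    simpa using ((hasDerivAt_id z).neg).exp
  have h1E : HasDerivAt (fun z : ℝ => 1 + Real.exp (-z)) (-Real.exp (-z)) z := hE.const_add 1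
  have hpos : (0 : ℝ) < 1 + Real.exp (-z) := by positivity
  have hne : (1 : ℝ) + Real.exp (-z) ≠ 0 := ne_of_gt hpos
  have hσ : HasDerivAt (fun z : ℝ => (1 + Real.exp (-z))⁻¹)
      (-(-Real.exp (-z)) / (1 + Real.exp (-z)) ^ 2) z := h1E.inv hne
  have hσpos : (0 : ℝ) < (1 + Real.exp (-z))⁻¹ := by positivity
  have h1σ : (0 : ℝ) < 1 - (1 + Real.exp (-z))⁻¹ := by
    have : (1 + Real.exp (-z))⁻¹ < 1 := by
      rw [inv_lt_one_iff₀]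
      right
      linarith [Real.exp_pos (-z)]
    linarith
  have hlog1 := hσ.log (ne_of_gt hσpos)
  have hlog2 := (hσ.const_sub 1).log (ne_of_gt h1σ)
  have H := (hlog1.const_mul y).add (hlog2.const_mul (1 - y))
  have heq : (fun z => y * Real.log (1 / (1 + Real.exp (-z)))
        + (1 - y) * Real.log (1 - 1 / (1 + Real.exp (-z))))
      = (fun z => y * Real.log ((1 + Real.exp (-z))⁻¹)
        + (1 - y) * Real.log (1 - (1 + Real.exp (-z))⁻¹)) := by
    simp [one_div]
  rw [heq]
  refine H.congr_deriv ?_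
  rw [one_div]
  have hEne : Real.exp (-z) ≠ 0 := (Real.exp_pos _).ne'
  field_simp
  ring

/-- Derivative of the binary cross-entropy loss of the augmented sample with respect
to the `j`-th interpolation coefficient: with `f(v) = σ(⟨w,v⟩ + b)`,
`l(v) = y·log f(v) + (1−y)·log(1−f(v))`, and `x_λ` the augmented feature vector, the
map `t ↦ l(x_{λ[j:=t]})` is differentiable at `t = λ_j` with derivative
`(y − f(x_λ)) · Σ_{i=j}^{d} w_i · D_{i,j}` where `D_{j,j} = x_{j−1,λ} − x_j` and
`D_{i,j} = (∏_{k=j+1}^{i} λ_k)·(x_{j−1,λ} − x_j)` for `i > j`. -/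
theorem bce_aug_hasDerivAt (d : ℕ) (x : ℕ → ℝ) (lam : ℕ → ℝ)
    (hlam : ∀ i, 1 ≤ i → i ≤ d → lam i ∈ Set.Ico (0 : ℝ) 1)
    (w : ℕ → ℝ) (b : ℝ) (y : ℝ) (hy : y = 0 ∨ y = 1)
    (j : ℕ) (hj1 : 1 ≤ j) (hjd : j ≤ d) :
    HasDerivAt
      (fun t =>
        y * Real.log (1 / (1 + Real.exp
              (-((∑ i ∈ Finset.range (d + 1), w i * interp x (Function.update lam j t) i) + b))))
          + (1 - y) * Real.log (1 - 1 / (1 + Real.exp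
              (-((∑ i ∈ Finset.range (d + 1), w i * interp x (Function.update lam j t) i) + b)))))
      ((y - 1 / (1 + Real.exp
          (-((∑ i ∈ Finset.range (d + 1), w i * interp x lam i) + b)))) *
        ∑ i ∈ Finset.Icc j d, w i *
          (if i = j then interp x lam (j - 1) - x j
           else (∏ k ∈ Finset.Icc (j + 1) i, lam k) * (interp x lam (j - 1) - x j)))
      (lam j) := by
  set c : ℕ → ℝ := fun n =>
    if n < j then 0
    else (∏ k ∈ Finset.Icc (j + 1) n, lam k) * (interp x lam (j - 1) - x j) with hc
  have hz : HasDerivAt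
      (fun t => (∑ i ∈ Finset.range (d + 1), w i * interp x (Function.update lam j t) i) + b)
      (∑ i ∈ Finset.range (d + 1), w i * c i) (lam j) := by
    apply HasDerivAt.add_const
    apply HasDerivAt.fun_sum
    intro i _
    exact (interp_hasDerivAt x lam j hj1 i).const_mul (w i)
  have H := (logistic_loss_hasDerivAt y _).comp (lam j) hz
  simp only [Function.update_eq_self] at H
  have hsum : (∑ i ∈ Finset.range (d + 1), w i * c i)
      = ∑ i ∈ Finset.Icc j d, w i *
          (if i = j then interp x lam (j - 1) - x j
           else (∏ k ∈ Finset.Icc (j + 1) i, lam k) * (interp x lam (j - 1) - x j)) := by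
    have hsub : Finset.Icc j d ⊆ Finset.range (d + 1) := by
      intro i hi
      have := Finset.mem_Icc.mp hi
      exact Finset.mem_range.mpr (by omega)
    have hzero : ∀ i ∈ Finset.range (d + 1), i ∉ Finset.Icc j d → w i * c i = 0 := by
      intro i hi hni
      have hir := Finset.mem_range.mp hi
      have hilt : i < j := by
        by_contra h
        exact hni (Finset.mem_Icc.mpr ⟨by omega, by omega⟩)
      simp [hc, if_pos hilt]
    rw [(Finset.sum_subset hsub hzero).symm]
    apply Finset.sum_congr rfl
    intro i hi
    have hij : j ≤ i := (Finset.mem_Icc.mp hi).1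
    simp only [hc, if_neg (by omega : ¬ i < j)]
    by_cases h : i = j
    · rw [if_pos h, h, Finset.Icc_eq_empty (by omega : ¬ j + 1 ≤ j),
        Finset.prod_empty, one_mul]
    · rw [if_neg h]
  rw [← hsum]
  exact H
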